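/- Let r ≥ 1 be an integer and τ ∈ ℂ with Im τ > 0. Define F : ℝ² → ℂ by F(p,q) = g₀(p + τq)·exp((2r+1)·π·i·q·(p+τq)). Then T_{(1/(2r+1),0)} F = F; that is, exp(−πi·q)·F(p + 1/(2r+1), q) = F(p,q) for all (p,q) ∈ ℝ². (This says that Ψ₀ is an eigenvector of T^*_{μ/(2r+1)} with eigenvalue 1.) -/

import Mathlib

/-- The theta function
`g₀(z) = Σ_{m∈ℤ} exp(m·π·i·((4r+2)·z + (2r+1)·m·τ))`. -/
noncomputable def gZero (r : ℕ) (τ : ℂ) (z : ℂ) : ℂ :=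
  ∑' m : ℤ, Complex.exp ((m : ℂ) * Real.pi * Complex.I *
      ((4 * (r : ℂ) + 2) * z + (2 * (r : ℂ) + 1) * (m : ℂ) * τ))

/-- The translation operator `T_x`:
`(T_x Φ)(p,q) = exp(−(2r+1)·π·i·(x₁·q − x₂·p))·Φ(p+x₁, q+x₂)`. -/
noncomputable def TOp (r : ℕ) (x : ℝ × ℝ) (Φ : ℝ → ℝ → ℂ) (p q : ℝ) : ℂ :=
  Complex.exp (-((2 * (r : ℂ) + 1) * Real.pi * Complex.I *
      ((x.1 : ℂ) * (q : ℂ) - (x.2 : ℂ) * (p : ℂ)))) * Φ (p + x.1) (q + x.2)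

lemma two_r_one_ne (r : ℕ) : (2 * (r : ℂ) + 1) ≠ 0 := by
  have h : (2 * (r : ℝ) + 1) ≠ 0 := by positivity
  exact_mod_cast h

lemma gZero_shift (r : ℕ) (τ : ℂ) (z : ℂ) :
    gZero r τ (z + 1 / (2 * (r : ℂ) + 1)) = gZero r τ z := by
  unfold gZero
  refine tsum_congr fun m => ?_
  have h := two_r_one_ne r
  rw [show (m : ℂ) * Real.pi * Complex.I *
      ((4 * (r : ℂ) + 2) * (z + 1 / (2 * (r : ℂ) + 1)) + (2 * (r : ℂ) + 1) * (m : ℂ) * τ)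
      = (m : ℂ) * Real.pi * Complex.I *
      ((4 * (r : ℂ) + 2) * z + (2 * (r : ℂ) + 1) * (m : ℂ) * τ)
      + (m : ℂ) * (2 * Real.pi * Complex.I) from by have h2 : (4 * (r : ℂ) + 2) * (1 / (2 * (r : ℂ) + 1)) = 2 := (by rw [mul_one_div, div_eq_iff h]; ring); linear_combination (m : ℂ) * Real.pi * Complex.I * h2,
    Complex.exp_add, Complex.exp_int_mul_two_pi_mul_I, mul_one]

lemma part2 (r : ℕ) (τ : ℂ) (p q : ℝ) :
    Complex.exp (-(Real.pi * Complex.I * (q : ℂ))) *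
        (gZero r τ (((p + 1 / (2 * (r : ℝ) + 1) : ℝ) : ℂ) + τ * (q : ℂ)) *
          Complex.exp ((2 * (r : ℂ) + 1) * Real.pi * Complex.I * (q : ℂ) *
            (((p + 1 / (2 * (r : ℝ) + 1) : ℝ) : ℂ) + τ * (q : ℂ))))
      = gZero r τ ((p : ℂ) + τ * (q : ℂ)) *
          Complex.exp ((2 * (r : ℂ) + 1) * Real.pi * Complex.I * (q : ℂ) *
            ((p : ℂ) + τ * (q : ℂ))) := by
  have h := two_r_one_ne r
  have harg : (((p + 1 / (2 * (r : ℝ) + 1) : ℝ) : ℂ) + τ * (q : ℂ))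
      = ((p : ℂ) + τ * (q : ℂ)) + 1 / (2 * (r : ℂ) + 1) := by
    push_cast; ring
  rw [harg, gZero_shift, mul_comm (Complex.exp _), mul_assoc, ← Complex.exp_add]
  congr 1
  congr 1
  field_simp
  ring

/-- the section `F(p,q) = g₀(p + τq)·exp((2r+1)·π·i·q·(p+τq))`
satisfies `T_{μ/(2r+1)} F = F`, i.e. `Ψ₀` is an eigenvector of
`T^*_{μ/(2r+1)}` with eigenvalue `1`. -/
theorem statement12 (r : ℕ) (hr : 1 ≤ r) (τ : ℂ) (hτ : 0 < τ.im) :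
    (∀ p q : ℝ,
      TOp r (1 / (2 * (r : ℝ) + 1), 0)
        (fun p' q' : ℝ => gZero r τ ((p' : ℂ) + τ * (q' : ℂ)) *
          Complex.exp ((2 * (r : ℂ) + 1) * Real.pi * Complex.I * (q' : ℂ) *
            ((p' : ℂ) + τ * (q' : ℂ)))) p q
      = gZero r τ ((p : ℂ) + τ * (q : ℂ)) *
          Complex.exp ((2 * (r : ℂ) + 1) * Real.pi * Complex.I * (q : ℂ) *
            ((p : ℂ) + τ * (q : ℂ))))
    ∧ ∀ p q : ℝ,
      Complex.exp (-(Real.pi * Complex.I * (q : ℂ))) *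
        (gZero r τ (((p + 1 / (2 * (r : ℝ) + 1) : ℝ) : ℂ) + τ * (q : ℂ)) *
          Complex.exp ((2 * (r : ℂ) + 1) * Real.pi * Complex.I * (q : ℂ) *
            (((p + 1 / (2 * (r : ℝ) + 1) : ℝ) : ℂ) + τ * (q : ℂ))))
      = gZero r τ ((p : ℂ) + τ * (q : ℂ)) *
          Complex.exp ((2 * (r : ℂ) + 1) * Real.pi * Complex.I * (q : ℂ) *
            ((p : ℂ) + τ * (q : ℂ))) := by
  constructor
  · intro p q
    have h := two_r_one_ne r
    unfold TOp
    simp only [add_zero]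
    rw [show -((2 * (r : ℂ) + 1) * Real.pi * Complex.I *
        (((1 / (2 * (r : ℝ) + 1) : ℝ) : ℂ) * (q : ℂ) - ((0 : ℝ) : ℂ) * (p : ℂ)))
        = -(Real.pi * Complex.I * (q : ℂ)) from by push_cast; field_simp; ring]
    exact part2 r τ p q
  · intro p q
    exact part2 r τ p q
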